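/- arXiv:0704.3864 — 6 statements merged into one kernel-verified Lean document; each statement's English description precedes it below -/
import Mathlib

section
/- Let K be a field of characteristic zero and let L be a finite-dimensional Lie algebra over K such that the first Chevalley–Eilenberg cohomology group H^1(L,V) vanishes for every finite-dimensional L-module V. Then L is semisimple. -/
universe u v w

theorem transfer_h1 (K : Type u) (L : Type v) [Field K] [LieRing L] [LieAlgebra K L]
    (h1 : ∀ (V : Type u) [AddCommGroup V] [Module K V] [LieRingModule L V] [LieModule K L V]
      [FiniteDimensional K V] (f : L →ₗ[K] V),
        (∀ x y : L, f ⁅x, y⁆ = ⁅x, f y⁆ - ⁅y, f x⁆) → ∃ v : V, ∀ x : L, f x = ⁅x, v⁆)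
    (V : Type w) [AddCommGroup V] [Module K V] [LieRingModule L V] [LieModule K L V]
    [FiniteDimensional K V] (f : L →ₗ[K] V)
    (hf : ∀ x y : L, f ⁅x, y⁆ = ⁅x, f y⁆ - ⁅y, f x⁆) : ∃ v : V, ∀ x : L, f x = ⁅x, v⁆ := by
  set n := Module.finrank K V with hn
  let e : V ≃ₗ[K] (Fin n → K) := (Module.finBasis K V).equivFun
  letI : LieRingModule L (Fin n → K) :=
    { bracket := fun x w => e ⁅x, e.symm w⁆
      add_lie := fun x y w => by show e ⁅x + y, e.symm w⁆ = e ⁅x, e.symm w⁆ + e ⁅y, e.symm w⁆; rw [add_lie, map_add]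
      lie_add := fun x w₁ w₂ => by
        show e ⁅x, e.symm (w₁ + w₂)⁆ = e ⁅x, e.symm w₁⁆ + e ⁅x, e.symm w₂⁆
        rw [map_add, lie_add, map_add]
      leibniz_lie := fun x y w => by
        show e ⁅x, e.symm (e ⁅y, e.symm w⁆)⁆ =
          e ⁅⁅x, y⁆, e.symm w⁆ + e ⁅y, e.symm (e ⁅x, e.symm w⁆)⁆
        rw [e.symm_apply_apply, e.symm_apply_apply, ← map_add, leibniz_lie] }
  haveI : LieModule K L (Fin n → K) :=
    { smul_lie := fun t x w => by
        show e ⁅t • x, e.symm w⁆ = t • e ⁅x, e.symm w⁆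
        rw [smul_lie, map_smul]
      lie_smul := fun t x w => by
        show e ⁅x, e.symm (t • w)⁆ = t • e ⁅x, e.symm w⁆
        rw [map_smul, lie_smul, map_smul] }
  obtain ⟨w, hw⟩ := h1 (Fin n → K) (e.toLinearMap ∘ₗ f) (by
    intro x y
    show e (f ⁅x, y⁆) = e ⁅x, e.symm (e (f y))⁆ - e ⁅y, e.symm (e (f x))⁆
    rw [e.symm_apply_apply, e.symm_apply_apply, hf, map_sub])
  refine ⟨e.symm w, fun x => ?_⟩
  have := hw x
  simp only [LinearMap.comp_apply, LinearEquiv.coe_toLinearMap] at this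
  have h2 : e (f x) = e ⁅x, e.symm w⁆ := this
  exact e.injective h2

/-- **A converse to the First Whitehead Lemma.**
If `L` is a finite-dimensional Lie algebra over a field `K` of characteristic zero such that
the first Chevalley–Eilenberg cohomology `H¹(L,V)` vanishes (every 1-cocycle is a
1-coboundary) for every finite-dimensional `L`-module `V`, then `L` is semisimple,
i.e. its solvable radical is zero. -/
theorem converse_first_whitehead_lemma
    (K : Type u) (L : Type v) [Field K] [CharZero K]
    [LieRing L] [LieAlgebra K L] [FiniteDimensional K L]
    (h1 : ∀ (V : Type u) [AddCommGroup V] [Module K V] [LieRingModule L V] [LieModule K L V]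
      [FiniteDimensional K V] (f : L →ₗ[K] V),
        (∀ x y : L, f ⁅x, y⁆ = ⁅x, f y⁆ - ⁅y, f x⁆) → ∃ v : V, ∀ x : L, f x = ⁅x, v⁆) :
    LieAlgebra.radical K L = ⊥ := by
  have htop : ⁅(⊤ : LieIdeal K L), (⊤ : LieIdeal K L)⁆ = ⊤ := by
    set D : LieIdeal K L := ⁅(⊤ : LieIdeal K L), (⊤ : LieIdeal K L)⁆ with hD
    have hmem : ∀ x y : L, ⁅x, y⁆ ∈ D := fun x y =>
      LieSubmodule.lie_mem_lie (LieSubmodule.mem_top x) (LieSubmodule.mem_top y)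
    have hzero : ∀ x y : L, LieSubmodule.Quotient.mk (N := D) ⁅x, y⁆ = 0 := fun x y =>
      (LieSubmodule.Quotient.mk_eq_zero' (N := D)).mpr (hmem x y)
    have hbr : ∀ (x y : L), ⁅x, LieSubmodule.Quotient.mk (N := D) y⁆
        = LieSubmodule.Quotient.mk (N := D) ⁅x, y⁆ := fun x y => rfl
    obtain ⟨v, hv⟩ := transfer_h1 K L h1 (L ⧸ D) ((LieSubmodule.Quotient.mk' D) : L →ₗ⁅K,L⁆ L ⧸ D).toLinearMap (by
      intro x y
      show LieSubmodule.Quotient.mk (N := D) ⁅x, y⁆ =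
        ⁅x, LieSubmodule.Quotient.mk (N := D) y⁆ - ⁅y, LieSubmodule.Quotient.mk (N := D) x⁆
      rw [hbr, hbr]; simp [hzero])
    rw [eq_top_iff]
    intro x _
    obtain ⟨ww, hww⟩ := LieSubmodule.Quotient.surjective_mk' D v
    have hx : LieSubmodule.Quotient.mk (N := D) x = ⁅x, v⁆ := hv x
    rw [← hww] at hx
    have hx2 : LieSubmodule.Quotient.mk (N := D) x = LieSubmodule.Quotient.mk (N := D) ⁅x, ww⁆ := by
      rw [hx]; exact (hbr x ww).symm
    have h3 : LieSubmodule.Quotient.mk (N := D) (x - ⁅x, ww⁆) = 0 := by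
      rw [show LieSubmodule.Quotient.mk (N := D) (x - ⁅x, ww⁆)
          = LieSubmodule.Quotient.mk (N := D) x - LieSubmodule.Quotient.mk (N := D) ⁅x, ww⁆ from
        map_sub (LieSubmodule.Quotient.mk' D).toLinearMap x ⁅x, ww⁆, hx2, sub_self]
    have h4 := (LieSubmodule.Quotient.mk_eq_zero' (N := D)).mp h3
    have := D.add_mem h4 (hmem x ww)
    simpa using this
  set R : LieIdeal K L := LieAlgebra.radical K L with hR
  let π : L →ₗ[K] (L ⧸ R) := (LieSubmodule.Quotient.mk' R).toLinearMap
  have hπsurj : Function.Surjective π := LieSubmodule.Quotient.surjective_mk' R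
  obtain ⟨s, hs⟩ := π.exists_rightInverse_of_surjective (LinearMap.range_eq_top.mpr hπsurj)
  have hs' : ∀ q, π (s q) = q := fun q => DFunLike.congr_fun hs q
  have hπlie : ∀ (x m : L), π ⁅x, m⁆ = ⁅x, π m⁆ := fun x m =>
    (LieSubmodule.Quotient.mk' R).map_lie x m
  have hval : ∀ (x : L) (q : L ⧸ R), ⁅x, s q⁆ - s ⁅x, q⁆ ∈ R := by
    intro x q
    have : π (⁅x, s q⁆ - s ⁅x, q⁆) = 0 := by
      rw [map_sub, hπlie, hs', hs', sub_self]
    exact (LieSubmodule.Quotient.mk_eq_zero' (N := R)).mp this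
  let f : L →ₗ[K] ((L ⧸ R) →ₗ[K] R) :=
    { toFun := fun x =>
        { toFun := fun q => ⟨⁅x, s q⁆ - s ⁅x, q⁆, hval x q⟩
          map_add' := fun q₁ q₂ => by
            apply Subtype.ext
            simp [lie_add, map_add]
            abel
          map_smul' := fun t q => by
            apply Subtype.ext
            simp [lie_smul, map_smul, smul_sub] }
      map_add' := fun x y => by
        apply LinearMap.ext; intro q
        apply Subtype.ext
        simp [add_lie, map_add]
        abel
      map_smul' := fun t x => by
        apply LinearMap.ext; intro q
        apply Subtype.ext
        simp [smul_lie, map_smul, smul_sub] }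
  have hf : ∀ x y : L, f ⁅x, y⁆ = ⁅x, f y⁆ - ⁅y, f x⁆ := by
    intro x y
    apply LinearMap.ext; intro q
    apply Subtype.ext
    show ⁅⁅x, y⁆, s q⁆ - s ⁅⁅x, y⁆, q⁆ = _
    have hrhs : ((⁅x, f y⁆ - ⁅y, f x⁆ : (L ⧸ R) →ₗ[K] R) q : L)
        = (⁅x, (f y) q⁆ - (f y) ⁅x, q⁆) - (⁅y, (f x) q⁆ - (f x) ⁅y, q⁆) := by
      rfl
    rw [hrhs]
    show _ = (⁅x, ⁅y, s q⁆ - s ⁅y, q⁆⁆ - (⁅y, s ⁅x, q⁆⁆ - s ⁅y, ⁅x, q⁆⁆))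
      - (⁅y, ⁅x, s q⁆ - s ⁅x, q⁆⁆ - (⁅x, s ⁅y, q⁆⁆ - s ⁅x, ⁅y, q⁆⁆))
    simp only [lie_lie, lie_sub, map_sub]
    abel
  obtain ⟨φ, hφ⟩ := transfer_h1 K L h1 _ f hf
  let t : (L ⧸ R) →ₗ[K] L := s - (LieSubmodule.incl R).toLinearMap ∘ₗ φ
  have hφR : ∀ q, ((φ q : L)) ∈ R := fun q => (φ q).2
  have ht_eq : ∀ (x : L) (q : L ⧸ R), ⁅x, t q⁆ = t ⁅x, q⁆ := by
    intro x q
    have hcoe : ⁅x, s q⁆ - s ⁅x, q⁆ = ⁅x, (φ q : L)⁆ - (φ ⁅x, q⁆ : L) := by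
      have h1 : ((f x) q : L) = ((⁅x, φ⁆ : (L ⧸ R) →ₗ[K] R) q : L) := by rw [hφ x]
      have h2 : ((⁅x, φ⁆ : (L ⧸ R) →ₗ[K] R) q : L) = ⁅x, (φ q : L)⁆ - (φ ⁅x, q⁆ : L) := rfl
      rw [← h2]; exact h1
    show ⁅x, s q - (φ q : L)⁆ = s ⁅x, q⁆ - (φ ⁅x, q⁆ : L)
    rw [lie_sub]
    exact sub_eq_sub_iff_sub_eq_sub.mp hcoe
  have hπt : ∀ q, π (t q) = q := by
    intro q
    show π (s q - (φ q : L)) = q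
    have : π ((φ q : L)) = 0 := (LieSubmodule.Quotient.mk_eq_zero' (N := R)).mpr (hφR q)
    rw [map_sub, hs', this, sub_zero]
  let B : LieIdeal K L :=
    { LinearMap.range t with
      lie_mem := by
        rintro x m hm
        obtain ⟨q, rfl⟩ := hm
        exact ⟨⁅x, q⁆, (ht_eq x q).symm⟩ }
  have hmemB : ∀ m : L, m ∈ B ↔ ∃ q, t q = m := fun m => Iff.rfl
  -- R ⊓ B = ⊥
  have hinf : R ⊓ B = ⊥ := by
    rw [eq_bot_iff]
    intro m hm
    obtain ⟨hmR, hmB⟩ := hm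
    obtain ⟨q, rfl⟩ := hmB
    have : π (t q) = 0 := (LieSubmodule.Quotient.mk_eq_zero' (N := R)).mpr hmR
    rw [hπt] at this
    simp [this, LieSubmodule.mem_bot]
  -- R ⊔ B = ⊤
  have hsup : R ⊔ B = ⊤ := by
    rw [eq_top_iff]
    intro m _
    rw [← LieSubmodule.mem_toSubmodule, LieSubmodule.sup_toSubmodule]
    apply Submodule.mem_sup.mpr
    refine ⟨m - t (π m), ?_, t (π m), ⟨π m, rfl⟩, by abel⟩
    have : π (m - t (π m)) = 0 := by rw [map_sub, hπt, sub_self]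
    exact (LieSubmodule.Quotient.mk_eq_zero' (N := R)).mp this
  -- ⊤ ≤ ⁅R,R⁆ ⊔ B
  have hkey : (⊤ : LieIdeal K L) ≤ ⁅R, R⁆ ⊔ B := by
    rw [← htop]
    calc ⁅(⊤ : LieIdeal K L), (⊤ : LieIdeal K L)⁆ = ⁅R ⊔ B, R ⊔ B⁆ := by rw [hsup]
      _ = (⁅R, R⁆ ⊔ ⁅R, B⁆) ⊔ (⁅B, R⁆ ⊔ ⁅B, B⁆) := by
          rw [LieSubmodule.sup_lie, LieSubmodule.lie_sup, LieSubmodule.lie_sup]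
      _ ≤ ⁅R, R⁆ ⊔ B := by
          apply sup_le <;> apply sup_le
          · exact le_sup_left
          · exact le_trans (LieSubmodule.lie_le_inf R B) (le_trans hinf.le bot_le)
          · refine le_trans (LieSubmodule.lie_le_inf B R) ?_
            rw [inf_comm]
            exact le_trans hinf.le bot_le
          · exact le_trans (LieSubmodule.lie_le_right B B) le_sup_right
  -- R = ⁅R,R⁆ by modularity
  have hRR : R = ⁅R, R⁆ := by
    have h1 : ⁅R, R⁆ ⊔ B = ⊤ := top_le_iff.mp (le_trans hkey le_rfl)
    have h2 : (⁅R, R⁆ ⊔ B) ⊓ R = ⁅R, R⁆ ⊔ (B ⊓ R) :=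
      sup_inf_assoc_of_le B (LieSubmodule.lie_le_left R R)
    rw [h1, top_inf_eq, inf_comm B R, hinf, sup_bot_eq] at h2
    exact h2
  -- conclude via solvability
  have hconst : ∀ k, LieAlgebra.derivedSeriesOfIdeal K L k R = R := by
    intro k
    induction k with
    | zero => exact LieAlgebra.derivedSeriesOfIdeal_zero K L R
    | succ k ih => rw [LieAlgebra.derivedSeriesOfIdeal_succ, ih, ← hRR]
  haveI : LieAlgebra.IsSolvable R := LieAlgebra.radicalIsSolvable K L
  obtain ⟨k, hk⟩ := (LieAlgebra.isSolvable_iff (R := K) (L := R)).mp this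
  rw [LieIdeal.derivedSeries_eq_bot_iff] at hk
  rw [← hconst k]
  exact hk
end

section
/- Let L be a finite-dimensional nilpotent Lie algebra over a field K of characteristic zero with dim L > 1. Then H^2(L,K) ≠ 0, where K is the trivial one-dimensional L-module. -/
universe u v

/-- **(Dixmier.)** If `L` is a finite-dimensional nilpotent Lie algebra of dimension `> 1`
over a field `K` of characteristic zero, then `H²(L,K) ≠ 0`: there is an alternating
bilinear 2-cocycle with trivial coefficients which is not a coboundary. -/
theorem nilpotent_second_cohomology_ne_zero
    (K : Type u) (L : Type v) [Field K] [CharZero K]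
    [LieRing L] [LieAlgebra K L] [FiniteDimensional K L]
    [LieRing.IsNilpotent L] (hdim : 1 < Module.finrank K L) :
    ∃ f : L →ₗ[K] L →ₗ[K] K,
      (∀ a : L, f a a = 0) ∧
      (∀ x y z : L, f ⁅x, y⁆ z - f ⁅x, z⁆ y + f ⁅y, z⁆ x = 0) ∧
      ¬ ∃ g : L →ₗ[K] K, ∀ x y : L, f x y = g ⁅x, y⁆ := by
  classical
  -- the commutator ideal
  set C : LieSubmodule K L L := ⁅(⊤ : LieIdeal K L), (⊤ : LieSubmodule K L L)⁆ with hC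
  have hbrC : ∀ a b : L, ⁅a, b⁆ ∈ C := fun a b =>
    LieSubmodule.lie_mem_lie (LieSubmodule.mem_top a) (LieSubmodule.mem_top b)
  -- the quotient has dimension ≥ 2
  have hQ2 : 2 ≤ Module.finrank K (L ⧸ C.toSubmodule) := by
    by_contra hlt
    push_neg at hlt
    have hle1 : Module.finrank K (L ⧸ C.toSubmodule) ≤ 1 := by omega
    obtain ⟨v, hv⟩ := (finrank_le_one_iff).mp hle1
    obtain ⟨x₁, hx₁⟩ := Submodule.Quotient.mk_surjective C.toSubmodule v
    have hdec : ∀ a : L, ∃ s : K, a - s • x₁ ∈ C := by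
      intro a
      obtain ⟨s, hs⟩ := hv (Submodule.Quotient.mk a)
      refine ⟨s, ?_⟩
      have : Submodule.Quotient.mk (p := C.toSubmodule) (a - s • x₁) = 0 := by
        rw [Submodule.Quotient.mk_sub, Submodule.Quotient.mk_smul, hx₁, hs, sub_self]
      exact (Submodule.Quotient.mk_eq_zero _).mp this
    have hCC : C ≤ ⁅(⊤ : LieIdeal K L), C⁆ := by
      rw [hC, LieSubmodule.lieIdeal_oper_eq_span, LieSubmodule.lieSpan_le]
      rintro z ⟨⟨a, -⟩, ⟨b, -⟩, rfl⟩
      obtain ⟨s, hs⟩ := hdec a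
      obtain ⟨t, ht⟩ := hdec b
      have e1 : ⁅a, b⁆ = ⁅a, b - t • x₁⁆ + t • ⁅a, x₁⁆ := by
        rw [lie_sub, lie_smul]; abel
      have e2 : ⁅a, x₁⁆ = -⁅x₁, a - s • x₁⁆ := by
        rw [lie_sub, lie_smul, lie_self, smul_zero, sub_zero]
        exact (lie_skew a x₁).symm
      rw [e1, e2]
      exact add_mem (LieSubmodule.lie_mem_lie (LieSubmodule.mem_top a) ht)
        (SMulMemClass.smul_mem t (neg_mem (LieSubmodule.lie_mem_lie (LieSubmodule.mem_top x₁) hs)))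
    have hCle : ∀ k, C ≤ LieModule.lowerCentralSeries K L L k := by
      intro k
      induction k with
      | zero => exact le_top
      | succ k ih =>
        rw [LieModule.lowerCentralSeries_succ]
        exact hCC.trans (LieSubmodule.mono_lie_right _ ih)
    obtain ⟨k, hk⟩ := LieModule.IsNilpotent.nilpotent K L L
    have hCbot : C = ⊥ := le_bot_iff.mp (hk ▸ hCle k)
    have hsub : C.toSubmodule = ⊥ := by rw [hCbot]; rfl
    have hfr := Submodule.finrank_quotient_add_finrank C.toSubmodule
    have h0 : Module.finrank K C.toSubmodule = 0 := by
      rw [hsub]; exact finrank_bot K L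
    omega
  -- choose x₁, x₂ and the functional ξ
  let bQ : Module.Basis (Fin (Module.finrank K (L ⧸ C.toSubmodule))) K (L ⧸ C.toSubmodule) :=
    Module.finBasis K (L ⧸ C.toSubmodule)
  have h0lt : 0 < Module.finrank K (L ⧸ C.toSubmodule) := by omega
  have h1lt : 1 < Module.finrank K (L ⧸ C.toSubmodule) := by omega
  let i0 : Fin (Module.finrank K (L ⧸ C.toSubmodule)) := ⟨0, h0lt⟩
  let i1 : Fin (Module.finrank K (L ⧸ C.toSubmodule)) := ⟨1, h1lt⟩
  let ξ : L →ₗ[K] K := (bQ.coord i0).comp C.toSubmodule.mkQ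
  obtain ⟨x₁, hx₁⟩ := Submodule.Quotient.mk_surjective C.toSubmodule (bQ i0)
  obtain ⟨x₂, hx₂⟩ := Submodule.Quotient.mk_surjective C.toSubmodule (bQ i1)
  have hmkQ : ∀ a : L, C.toSubmodule.mkQ a = Submodule.Quotient.mk a := fun a => rfl
  have hξx₁ : ξ x₁ = 1 := by
    simp only [ξ, LinearMap.comp_apply, hmkQ, hx₁, Module.Basis.coord_apply, Module.Basis.repr_self]
    exact Finsupp.single_eq_same
  have hξx₂ : ξ x₂ = 0 := by
    simp only [ξ, LinearMap.comp_apply, hmkQ, hx₂, Module.Basis.coord_apply, Module.Basis.repr_self]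
    exact Finsupp.single_eq_of_ne (by simp [i0, i1, Fin.ext_iff])
  have hξC : ∀ c ∈ C, ξ c = 0 := by
    intro c hc
    have : C.toSubmodule.mkQ c = 0 := by
      rw [hmkQ, Submodule.Quotient.mk_eq_zero]; exact hc
    simp [ξ, LinearMap.comp_apply, this]
  have hξbr : ∀ a b : L, ξ ⁅a, b⁆ = 0 := fun a b => hξC _ (hbrC a b)
  have hx₂C : x₂ ∉ C := by
    intro hmem
    have : bQ i1 = 0 := by
      rw [← hx₂, Submodule.Quotient.mk_eq_zero]; exact hmem
    exact bQ.ne_zero i1 this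
  -- the span B of brackets of elements of M = ker ξ
  set B : Submodule K L :=
    Submodule.span K {z | ∃ p, ξ p = 0 ∧ ∃ q, ξ q = 0 ∧ ⁅p, q⁆ = z} with hBdef
  have hBC : B ≤ C.toSubmodule := by
    rw [hBdef, Submodule.span_le]
    rintro z ⟨p, -, q, -, rfl⟩
    exact hbrC p q
  have hx₂B : x₂ ∉ B := fun h => hx₂C (hBC h)
  -- the nilpotent endomorphism D = ad x₁
  set D : Module.End K L := LieModule.toEnd K L L x₁ with hDdef
  have hD : ∀ a : L, D a = ⁅x₁, a⁆ := fun a => rfl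
  have hDnil : IsNilpotent D := LieModule.isNilpotent_toEnd_of_isNilpotent K L L x₁
  have hPex : ∃ n, (D ^ n) x₂ ∈ B := by
    obtain ⟨N, hN⟩ := hDnil
    exact ⟨N, by rw [hN]; simpa using B.zero_mem⟩
  set k := Nat.find hPex with hkdef
  have hkspec : (D ^ k) x₂ ∈ B := Nat.find_spec hPex
  have hk0 : k ≠ 0 := by
    intro h
    apply hx₂B
    have := hkspec
    rw [h, pow_zero] at this
    simpa using this
  set u : L := (D ^ (k - 1)) x₂ with hudef
  have huB : u ∉ B := Nat.find_min hPex (by omega)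
  have hDu : ⁅x₁, u⁆ ∈ B := by
    have hk1 : k - 1 + 1 = k := Nat.succ_pred_eq_of_pos (Nat.pos_of_ne_zero hk0)
    have : D u = (D ^ k) x₂ := by
      rw [hudef, ← Module.End.mul_apply, ← pow_succ', hk1]
    rw [← hD, this]; exact hkspec
  have hξpow : ∀ j, ξ ((D ^ j) x₂) = 0 := by
    intro j
    cases j with
    | zero => simpa using hξx₂
    | succ j =>
      have : (D ^ (j + 1)) x₂ = ⁅x₁, (D ^ j) x₂⁆ := by
        rw [pow_succ', Module.End.mul_apply, hD]
      rw [this]; exact hξbr _ _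
  have hξu : ξ u = 0 := hξpow (k - 1)
  -- the functional τ
  obtain ⟨τ₀, hτ₀u, hτ₀B⟩ := Submodule.exists_dual_map_eq_bot_of_notMem huB inferInstance
  set τ : L →ₗ[K] K := (τ₀ u)⁻¹ • τ₀ with hτdef
  have hτu : τ u = 1 := by
    simp [hτdef, inv_mul_cancel₀ hτ₀u]
  have hτB : ∀ w ∈ B, τ w = 0 := by
    intro w hw
    have : τ₀ w ∈ B.map τ₀ := Submodule.mem_map_of_mem hw
    rw [hτ₀B] at this
    simp only [Submodule.mem_bot] at this
    simp [hτdef, this]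
  have hτbr0 : ∀ p q : L, ξ p = 0 → ξ q = 0 → τ ⁅p, q⁆ = 0 := by
    intro p q hp hq
    exact hτB _ (Submodule.subset_span ⟨p, hp, q, hq, rfl⟩)
  -- the cocycle f
  refine ⟨ξ.smulRight τ - τ.smulRight ξ, ?_, ?_, ?_⟩
  case _ =>
    intro a
    simp [smul_eq_mul, mul_comm]
  case _ =>
    have hf : ∀ a b : L, (ξ.smulRight τ - τ.smulRight ξ) a b = ξ a * τ b - τ a * ξ b := by
      intro a b; simp [smul_eq_mul]
    have hbr : ∀ a c : L, τ ⁅a, c⁆ = ξ a * τ ⁅x₁, c⁆ - ξ c * τ ⁅x₁, a⁆ := by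
      intro a c
      have hpa : ξ (a - ξ a • x₁) = 0 := by simp [hξx₁]
      have hpc : ξ (c - ξ c • x₁) = 0 := by simp [hξx₁]
      have h0 := hτbr0 _ _ hpa hpc
      have hexp : ⁅a - ξ a • x₁, c - ξ c • x₁⁆ =
          ⁅a, c⁆ - ξ c • ⁅a, x₁⁆ - ξ a • ⁅x₁, c⁆ + (ξ a * ξ c) • ⁅x₁, x₁⁆ := by
        simp only [sub_lie, lie_sub, smul_lie, lie_smul, smul_sub, smul_smul]
        rw [mul_comm (ξ a) (ξ c)]
        abel
      rw [hexp, lie_self, smul_zero, add_zero, map_sub, map_sub, map_smul, map_smul] at h0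
      have hskew : τ ⁅a, x₁⁆ = -τ ⁅x₁, a⁆ := by
        rw [← lie_skew a x₁, map_neg]
      rw [hskew] at h0
      simp only [smul_eq_mul] at h0
      linear_combination h0
    intro x y z
    rw [hf, hf, hf, hξbr, hξbr, hξbr, hbr x y, hbr x z, hbr y z]
    ring
  case _ =>
    rintro ⟨g, hg⟩
    have hf : ∀ a b : L, (ξ.smulRight τ - τ.smulRight ξ) a b = ξ a * τ b - τ a * ξ b := by
      intro a b; simp [smul_eq_mul]
    have hgB : ∀ w ∈ B, g w = 0 := by
      intro w hw
      induction hw using Submodule.span_induction with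
      | mem z hz =>
        obtain ⟨p, hp, q, hq, rfl⟩ := hz
        rw [← hg p q, hf, hp, hq]
        ring
      | zero => simp
      | add a b _ _ ha hb => rw [map_add, ha, hb, add_zero]
      | smul t a _ ha => rw [map_smul, ha, smul_zero]
    have h1 : (ξ.smulRight τ - τ.smulRight ξ) x₁ u = 1 := by
      rw [hf, hξx₁, hτu, hξu]
      ring
    rw [hg x₁ u, hgB _ hDu] at h1
    exact zero_ne_one h1
end

section
/- Let L be a 2-trivial Lie algebra over a field K of characteristic zero, and suppose L is the semidirect sum L = S ⋉ I of a subalgebra S and an ideal I. Then S is 2-trivial. -/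
universe u v

section TwoCohomology

variable (K : Type u) [Field K]
variable (L : Type v) [LieRing L] [LieAlgebra K L]

/-- `f` is an alternating bilinear 2-cocycle on `L` with values in the `L`-module `V`:
it satisfies `f a a = 0` and the Chevalley–Eilenberg 2-cocycle identity. -/
def IsLieTwoCocycle {V : Type*} [AddCommGroup V] [Module K V] [LieRingModule L V]
    (f : L →ₗ[K] L →ₗ[K] V) : Prop :=
  (∀ a : L, f a a = 0) ∧
    ∀ x y z : L,
      ⁅x, f y z⁆ - ⁅y, f x z⁆ + ⁅z, f x y⁆ - f ⁅x, y⁆ z + f ⁅x, z⁆ y - f ⁅y, z⁆ x = 0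

/-- `f` is a 2-coboundary: `f (x, y) = x · g y − y · g x − g ⁅x, y⁆` for some linear `g`. -/
def IsLieTwoCoboundary {V : Type*} [AddCommGroup V] [Module K V] [LieRingModule L V]
    (f : L →ₗ[K] L →ₗ[K] V) : Prop :=
  ∃ g : L →ₗ[K] V, ∀ x y : L, f x y = ⁅x, g y⁆ - ⁅y, g x⁆ - g ⁅x, y⁆

/-- A finite-dimensional Lie algebra `L` is 2-trivial if `H²(L,V) = 0`, i.e. every
alternating 2-cocycle is a 2-coboundary, for every finite-dimensional `L`-module `V`. -/
def IsTwoTrivial : Prop :=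
  ∀ (V : Type u) [AddCommGroup V] [Module K V] [LieRingModule L V] [LieModule K L V]
    [FiniteDimensional K V] (f : L →ₗ[K] L →ₗ[K] V),
      IsLieTwoCocycle K L f → IsLieTwoCoboundary K L f

end TwoCohomology

/-- If a 2-trivial Lie algebra `L` over a field of characteristic zero is the semidirect sum
`L = S ⋉ I` of a subalgebra `S` and an ideal `I` (so `L = S ⊕ I` as vector spaces), then
`S` is 2-trivial. -/
theorem isTwoTrivial_of_semidirect_summand
    (K : Type u) (L : Type v) [Field K] [CharZero K]
    [LieRing L] [LieAlgebra K L] [FiniteDimensional K L]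
    (S : LieSubalgebra K L) (I : LieIdeal K L)
    (hcompl : IsCompl S.toSubmodule I.toSubmodule)
    (h2 : IsTwoTrivial K L) :
    IsTwoTrivial K ↥S := by
  classical
  intro V _ _ _ _ _ f hf
  -- the projection L → S along I
  let π : L →ₗ[K] S := Submodule.projectionOnto S.toSubmodule I.toSubmodule hcompl
  have hπS : ∀ s : S, π (s : L) = s := fun s =>
    Submodule.linearProjOfIsCompl_apply_left hcompl s
  have hπI : ∀ x : L, x ∈ I → π x = 0 := fun x hx =>
    Submodule.projectionOnto_apply_of_mem_right hcompl hx
  -- π is a Lie algebra morphism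
  have hπb : ∀ x y : L, π ⁅x, y⁆ = ⁅π x, π y⁆ := by
    intro x y
    have hxI : x - (π x : L) ∈ I := by
      have : π (x - (π x : L)) = 0 := by
        rw [map_sub, hπS (π x), sub_self]
      have hk := Submodule.linearProjOfIsCompl_ker hcompl
      rw [← LinearMap.mem_ker (f := π)] at this
      rwa [hk] at this
    have hyI : y - (π y : L) ∈ I := by
      have : π (y - (π y : L)) = 0 := by
        rw [map_sub, hπS (π y), sub_self]
      have hk := Submodule.linearProjOfIsCompl_ker hcompl
      rw [← LinearMap.mem_ker (f := π)] at this
      rwa [hk] at this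
    have hdec : ⁅x, y⁆ = (⁅π x, π y⁆ : S) +
        (⁅(π x : L), y - π y⁆ + ⁅x - π x, (π y : L)⁆ + ⁅x - π x, y - π y⁆) := by
      have : ⁅x, y⁆ = ⁅(π x : L) + (x - π x), (π y : L) + (y - π y)⁆ := by
        congr 1 <;> abel
      rw [this, lie_add, add_lie, add_lie]
      have hc : (⁅(π x : L), (π y : L)⁆ : L) = ((⁅π x, π y⁆ : S) : L) := rfl
      rw [hc]; abel
    have hrI : ⁅(π x : L), y - π y⁆ + ⁅x - π x, (π y : L)⁆ + ⁅x - π x, y - π y⁆ ∈ I := by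
      refine add_mem (add_mem ?_ ?_) ?_
      · exact lie_mem_right K L I _ _ hyI
      · exact lie_mem_left K L I _ _ hxI
      · exact lie_mem_right K L I _ _ hyI
    rw [hdec, map_add, hπS, hπI _ hrI, add_zero]
  -- make V an L-module via π
  let bS : S → V → V := fun s v => ⁅s, v⁆
  letI : LieRingModule L V :=
    { bracket := fun x v => ⁅π x, v⁆
      add_lie := fun x y v => by simp only [map_add, add_lie]
      lie_add := fun x u v => by
        show ⁅π x, u + v⁆ = ⁅π x, u⁆ + ⁅π x, v⁆
        exact lie_add _ _ _
      leibniz_lie := fun x y v => by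
        show ⁅π x, ⁅π y, v⁆⁆ = ⁅π ⁅x, y⁆, v⁆ + ⁅π y, ⁅π x, v⁆⁆
        rw [hπb]; exact leibniz_lie _ _ _ }
  letI : LieModule K L V :=
    { smul_lie := fun t x v => by
        show bS (π (t • x)) v = t • bS (π x) v
        rw [map_smul]; exact smul_lie t (π x) v
      lie_smul := fun t x v => by
        show bS (π x) (t • v) = t • bS (π x) v
        exact lie_smul t (π x) v }
  -- pull back f
  let F : L →ₗ[K] L →ₗ[K] V := f.compl₁₂ π π
  have hF : IsLieTwoCocycle K L F := by
    constructor
    · intro a; exact hf.1 (π a)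
    · intro x y z
      show bS (π x) (f (π y) (π z)) - bS (π y) (f (π x) (π z)) + bS (π z) (f (π x) (π y))
        - f (π ⁅x, y⁆) (π z) + f (π ⁅x, z⁆) (π y) - f (π ⁅y, z⁆) (π x) = 0
      rw [hπb, hπb, hπb]
      exact hf.2 (π x) (π y) (π z)
  obtain ⟨g, hg⟩ := h2 V F hF
  refine ⟨g.comp S.toSubmodule.subtype, fun x y => ?_⟩
  have h := hg (x : L) (y : L)
  have hbr : (⁅(x : L), (y : L)⁆ : L) = ((⁅x, y⁆ : S) : L) := rfl
  show f x y = bS x (g (y : L)) - bS y (g (x : L)) - g ((⁅x, y⁆ : S) : L)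
  rw [← hbr]
  have h2' : F (x : L) (y : L) = f x y := by
    show f (π x) (π y) = f x y
    rw [hπS, hπS]
  rw [h2'] at h
  have hb1 : (⁅(x:L), g (y:L)⁆ : V) = bS x (g (y:L)) := by
    show bS (π (x:L)) (g (y:L)) = bS x (g (y:L))
    rw [hπS]
  have hb2 : (⁅(y:L), g (x:L)⁆ : V) = bS y (g (x:L)) := by
    show bS (π (y:L)) (g (x:L)) = bS y (g (x:L))
    rw [hπS]
  rw [hb1, hb2] at h
  exact h
end

section
/- Let L be a 2-trivial Lie algebra over a field K of characteristic zero, and suppose L = A ⊕ B is a direct sum of two ideals A and B (with [A,B] = 0). Then A is 2-trivial. -/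
universe u v

/-- If a 2-trivial Lie algebra `L` over a field of characteristic zero is the direct sum
`L = A ⊕ B` of two ideals `A` and `B` (with `⁅A, B⁆ = 0`), then `A` is 2-trivial. -/
theorem isTwoTrivial_of_direct_summand
    (K : Type u) (L : Type v) [Field K] [CharZero K]
    [LieRing L] [LieAlgebra K L] [FiniteDimensional K L]
    (A B : LieIdeal K L) (hcompl : IsCompl A B) (hAB : ⁅A, B⁆ = (⊥ : LieIdeal K L))
    (h2 : IsTwoTrivial K L) :
    IsTwoTrivial K ↥A := by
  have hc : IsCompl (A : Submodule K L) (B : Submodule K L) :=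
    LieSubmodule.isCompl_toSubmodule.mpr hcompl
  set π : L →ₗ[K] A := Submodule.linearProjOfIsCompl _ _ hc with hπ
  have hπA : ∀ a : A, π (a : L) = a := fun a =>
    Submodule.linearProjOfIsCompl_apply_left hc a
  have hπB : ∀ x : L, x ∈ B → π x = 0 := fun x hx =>
    Submodule.projectionOnto_apply_of_mem_right hc hx
  have hzero : ∀ a ∈ A, ∀ b ∈ B, ⁅a, b⁆ = (0 : L) := by
    intro a ha b hb
    have h := LieSubmodule.lie_mem_lie ha hb
    rw [hAB] at h
    exact (LieSubmodule.mem_bot _).mp h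
  have hB : ∀ x : L, x - (π x : L) ∈ B := by
    intro x
    have h := Submodule.projection_add_projection_eq_self hc x
    have : x - (π x : L) = ((Submodule.linearProjOfIsCompl _ _ hc.symm) x : L) := by
      rw [eq_comm, eq_sub_iff_add_eq, add_comm]; exact h
    rw [this]; exact Subtype.coe_prop _
  have key : ∀ x y : L, π ⁅x, y⁆ = ⁅π x, π y⁆ := by
    intro x y
    have h1 : ⁅(π x : L), y - (π y : L)⁆ = 0 :=
      hzero _ (π x).2 _ (hB y)
    have h2 : ⁅x - (π x : L), (π y : L)⁆ = 0 := by
      rw [← lie_skew, hzero _ (π y).2 _ (hB x), neg_zero]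
    have expand : ⁅x, y⁆ = ⁅(π x : L), (π y : L)⁆ + ⁅x - (π x : L), y - (π y : L)⁆ := by
      have hx : x = (π x : L) + (x - (π x : L)) := by abel
      have hy : y = (π y : L) + (y - (π y : L)) := by abel
      conv_lhs => rw [hx, hy]
      rw [lie_add, add_lie, add_lie, h1, h2]
      abel
    have hmemA : ⁅(π x : L), (π y : L)⁆ ∈ A := A.lie_mem (π y).2
    have hmemB : ⁅x - (π x : L), y - (π y : L)⁆ ∈ B := B.lie_mem (hB y)
    rw [expand, map_add, hπB _ hmemB, add_zero]
    have h3 : π ⁅(π x : L), (π y : L)⁆ = ⟨⁅(π x : L), (π y : L)⁆, hmemA⟩ :=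
      Submodule.linearProjOfIsCompl_apply_left hc ⟨_, hmemA⟩
    rw [h3]
    apply Subtype.ext
    simp [LieIdeal.coe_bracket_of_module]
  -- Lie algebra hom from L to A
  let πL : L →ₗ⁅K⁆ ↥A :=
    { π with
      map_lie' := fun {x y} => key x y }
  have hπL : ∀ x : L, πL x = π x := fun _ => rfl
  intro V _ _ instA _ _ f hf
  letI : LieRingModule L V := LieRingModule.compLieHom V πL
  haveI : LieModule K L V := LieModule.compLieHom V πL
  set F : L →ₗ[K] L →ₗ[K] V := f.compl₁₂ πL.toLinearMap πL.toLinearMap with hF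
  have hFapp : ∀ x y : L, F x y = f (πL x) (πL y) := fun _ _ => rfl
  have hbr : ∀ (x : L) (v : V), ⁅x, v⁆ = @Bracket.bracket A V instA.toBracket (πL x) v := fun _ _ => rfl
  obtain ⟨g, hg⟩ : IsLieTwoCoboundary K L F := by
    apply h2 V F
    constructor
    · intro a
      rw [hFapp]; exact hf.1 _
    · intro x y z
      have h := hf.2 (πL x) (πL y) (πL z)
      simpa [hFapp, hbr, LieHom.map_lie] using h
  refine ⟨g ∘ₗ (A : Submodule K L).subtype, fun a b => ?_⟩
  have h := hg (a : L) (b : L)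
  have hπa : πL (a : L) = a := hπA a
  have hπb : πL (b : L) = b := hπA b
  have hab : (⁅(a : L), (b : L)⁆ : L) = ((⁅a, b⁆ : A) : L) := by
    simp [LieIdeal.coe_bracket_of_module]
  rw [hFapp, hπa, hπb] at h
  rw [hbr (a : L), hbr (b : L), hπa, hπb, hab] at h
  exact h
end

section
/- Let L be a 2-trivial Lie algebra over a field K of characteristic zero and let I be an ideal of L of codimension 1. Then I is a direct summand of L: there exists x′ ∈ L with x′ ∉ I such that L = I ⊕ Kx′ and [I, x′] = 0; in particular L is the direct sum of the ideal I and the one-dimensional ideal Kx′. -/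
universe u v

namespace CodimOneAux

variable {K : Type u} [Field K] {L : Type v} [LieRing L] [LieAlgebra K L]

/-- Inclusion of an ideal as a linear map. -/
def subI (I : LieIdeal K L) : (↥I) →ₗ[K] L where
  toFun m := (m : L)
  map_add' _ _ := rfl
  map_smul' _ _ := rfl

/-- Derivations of the ideal `I` (with respect to the restricted adjoint action). -/
def derivs (I : LieIdeal K L) : Submodule K ((↥I) →ₗ[K] (↥I)) where
  carrier := {E | ∀ u v : ↥I, E ⁅(u : L), v⁆ = ⁅((E u : ↥I) : L), v⁆ + ⁅(u : L), E v⁆}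
  add_mem' := by
    intro E F hE hF u v
    simp only [LinearMap.add_apply, hE u v, hF u v, LieSubmodule.coe_add, add_lie, lie_add]
    abel
  zero_mem' := by intro u v; simp
  smul_mem' := by
    intro c E hE u v
    simp only [LinearMap.smul_apply, hE u v, LieSubmodule.coe_smul, smul_lie, lie_smul, smul_add]

lemma mem_derivs_iff {I : LieIdeal K L} {E : (↥I) →ₗ[K] (↥I)} :
    E ∈ derivs I ↔ ∀ u v : ↥I, E ⁅(u : L), v⁆ = ⁅((E u : ↥I) : L), v⁆ + ⁅(u : L), E v⁆ :=
  Iff.rfl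

lemma skew (I : LieIdeal K L) (u v : ↥I) : ⁅(u : L), v⁆ = -⁅(v : L), u⁆ := by
  apply Subtype.ext
  show ⁅(u : L), (v : L)⁆ = -⁅(v : L), (u : L)⁆
  rw [← lie_skew]

/-- The inner-derivation map. -/
def adI (I : LieIdeal K L) : (↥I) →ₗ[K] ((↥I) →ₗ[K] (↥I)) :=
  ((LieModule.toEnd K L ↥I : L →ₗ[K] Module.End K ↥I)).comp (subI I)

@[simp] lemma adI_apply (I : LieIdeal K L) (u v : ↥I) :
    adI I u v = ⁅(u : L), v⁆ := rfl

lemma delta_mem (I : LieIdeal K L) (x : L) :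
    (LieModule.toEnd K L (↥I) x : (↥I) →ₗ[K] (↥I)) ∈ derivs I := by
  intro u v
  simp only [LieModule.toEnd_apply_apply]
  show ⁅x, ⁅(u : L), v⁆⁆ = ⁅(⁅x, (u : L)⁆ : L), v⁆ + ⁅(u : L), ⁅x, v⁆⁆
  exact leibniz_lie x (u : L) v

lemma comm_mem {I : LieIdeal K L} {d e : (↥I) →ₗ[K] (↥I)}
    (hd : d ∈ derivs I) (he : e ∈ derivs I) : d ∘ₗ e - e ∘ₗ d ∈ derivs I := by
  intro u v
  simp only [LinearMap.sub_apply, LinearMap.comp_apply, LieSubmodule.coe_sub, sub_lie, lie_sub]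
  rw [he u v, map_add, hd (e u) v, hd u (e v), hd u v, map_add, he (d u) v, he u (d v)]
  abel

/-- The projection onto `I` along `x`. -/
def proj (I : LieIdeal K L) (x : L) (lam : L →ₗ[K] K)
    (hker : ∀ a : L, a ∈ I ↔ lam a = 0) (hx1 : lam x = 1) : L →ₗ[K] ↥I where
  toFun a := ⟨a - lam a • x, (hker _).mpr (by simp [hx1])⟩
  map_add' a b := by
    apply Subtype.ext
    show (a + b) - lam (a + b) • x = (a - lam a • x) + (b - lam b • x)
    rw [map_add, add_smul]; abel
  map_smul' c a := by
    apply Subtype.ext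
    show (c • a) - lam (c • a) • x = c • (a - lam a • x)
    rw [map_smul, smul_eq_mul, smul_sub, smul_smul]

lemma bracket_mem (I : LieIdeal K L) (x : L) (lam : L →ₗ[K] K)
    (hker : ∀ a : L, a ∈ I ↔ lam a = 0) (hx1 : lam x = 1) (a b : L) :
    ⁅a, b⁆ ∈ I := by
  have hx' : ∀ c : L, ⁅c, x⁆ ∈ I := by
    intro c
    have h1 : c - lam c • x ∈ I := (hker _).mpr (by simp [hx1])
    have : ⁅c, x⁆ = ⁅c - lam c • x, x⁆ + lam c • ⁅x, x⁆ := by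
      rw [← smul_lie, ← add_lie]; congr 1; abel
    rw [this, lie_self, smul_zero, add_zero, ← neg_neg ⁅c - lam c • x, x⁆, lie_skew]
    exact neg_mem (I.lie_mem h1)
  have hb : b - lam b • x ∈ I := (hker _).mpr (by simp [hx1])
  have : ⁅a, b⁆ = ⁅a, b - lam b • x⁆ + lam b • ⁅a, x⁆ := by
    rw [← lie_smul, ← lie_add]; congr 1; abel
  rw [this]
  exact add_mem (I.lie_mem hb) (Submodule.smul_mem _ _ (hx' a))

set_option maxHeartbeats 2000000 in
/-- The key consequence of 2-triviality: every derivation of `I` is, modulo inner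
derivations, a bracket `[δ, E]` with `δ = ad x|_I`. -/
lemma key_ex [FiniteDimensional K L] (I : LieIdeal K L) (x : L) (lam : L →ₗ[K] K)
    (hker : ∀ a : L, a ∈ I ↔ lam a = 0) (hx1 : lam x = 1)
    (h2 : IsTwoTrivial K L) (e0 : (↥I) →ₗ[K] (↥I)) (he0 : e0 ∈ derivs I) :
    ∃ E ∈ derivs I, ∃ i : ↥I, ∀ v : ↥I,
      e0 v = ⁅x, E v⁆ - E ⁅x, v⁆ + ⁅(i : L), v⁆ := by
  haveI : FiniteDimensional K (↥I) := inferInstanceAs (FiniteDimensional K I.toSubmodule)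
  set p := proj I x lam hker hx1 with hp
  have hco : ∀ a : L, ((p a : ↥I) : L) = a - lam a • x := fun a => rfl
  have hdecomp : ∀ a : L, a = ((p a : ↥I) : L) + lam a • x := by
    intro a; rw [hco]; abel
  have hlam0 : ∀ a b : L, lam ⁅a, b⁆ = 0 :=
    fun a b => (hker _).mp (bracket_mem I x lam hker hx1 a b)
  have hpmem : ∀ u : ↥I, p (u : L) = u := by
    intro u
    apply Subtype.ext
    rw [hco, (hker _).mp u.2]; simp
  have hpx : p x = 0 := by
    apply Subtype.ext
    rw [hco, hx1]; simp
  have hbr : ∀ (b : L) (m : ↥I), ⁅b, m⁆ = ⁅((p b : ↥I) : L), m⁆ + lam b • ⁅x, m⁆ := by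
    intro b m
    conv_lhs => rw [hdecomp b]
    rw [add_lie, smul_lie]
  have hpbr : ∀ b c : L, p ⁅b, c⁆ = ⁅b, p c⁆ - lam c • ⁅x, p b⁆ := by
    intro b c
    apply Subtype.ext
    show ⁅b, c⁆ - lam ⁅b, c⁆ • x = ((⁅b, p c⁆ - lam c • ⁅x, p b⁆ : ↥I) : L)
    rw [hlam0 b c, zero_smul, sub_zero, LieSubmodule.coe_sub, LieSubmodule.coe_smul,
      LieSubmodule.coe_bracket, LieSubmodule.coe_bracket, hco, hco,
      lie_sub, lie_smul, lie_sub, lie_smul, lie_self, smul_zero, sub_zero,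
      ← lie_skew b x]
    module
  -- the 2-cocycle with values in `I`
  set fM : L →ₗ[K] L →ₗ[K] ↥I := LinearMap.mk₂ K
      (fun a b => lam a • e0 (p b) - lam b • e0 (p a))
      (by intro a a' b; simp only [map_add, add_smul]; module)
      (by intro c a b; simp only [map_smul, smul_eq_mul]; module)
      (by intro a b b'; simp only [map_add, add_smul]; module)
      (by intro c a b; simp only [map_smul, smul_eq_mul]; module) with hfMdef
  have hf : ∀ a b : L, fM a b = lam a • e0 (p b) - lam b • e0 (p a) := by
    intro a b; rw [hfMdef]; rfl
  have hAlt : ∀ a : L, fM a a = 0 := by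
    intro a; rw [hf a a, sub_self]
  have hG : ∀ a b c : L,
      ⁅a, fM b c⁆ - ⁅b, fM a c⁆ + ⁅c, fM a b⁆ - fM ⁅a, b⁆ c + fM ⁅a, c⁆ b - fM ⁅b, c⁆ a = 0 := by
    intro a b c
    rw [hf b c, hf a c, hf a b, hf ⁅a, b⁆ c, hf ⁅a, c⁆ b, hf ⁅b, c⁆ a,
      hlam0 a b, hlam0 a c, hlam0 b c, zero_smul, zero_smul, zero_smul,
      hpbr a b, hpbr a c, hpbr b c,
      lie_sub, lie_sub, lie_sub, lie_smul, lie_smul, lie_smul, lie_smul, lie_smul, lie_smul,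
      hbr a (e0 (p c)), hbr a (e0 (p b)), hbr b (e0 (p c)), hbr b (e0 (p a)),
      hbr c (e0 (p b)), hbr c (e0 (p a))]
    simp only [map_sub, map_smul]
    rw [hbr a (p b), hbr a (p c), hbr b (p c)]
    simp only [map_add, map_smul]
    rw [(mem_derivs_iff.mp he0) (p a) (p b), (mem_derivs_iff.mp he0) (p a) (p c),
      (mem_derivs_iff.mp he0) (p b) (p c),
      skew I (e0 (p a)) (p b), skew I (e0 (p a)) (p c), skew I (e0 (p b)) (p c)]
    module
  clear_value fM
  clear hfMdef
  -- transport to a module in universe `u` and apply 2-triviality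
  obtain ⟨g, hg⟩ : ∃ g : L →ₗ[K] ↥I, ∀ a b : L, fM a b = ⁅a, g b⁆ - ⁅b, g a⁆ - g ⁅a, b⁆ := by
    set eW := (Module.finBasis K (↥I)).equivFun with heW
    set W := (Fin (Module.finrank K ↥I) → K) with hW
    letI : LieRingModule L W :=
      { bracket := fun a w => eW ⁅a, eW.symm w⁆
        add_lie := by
          intro a b w
          show eW ⁅a + b, eW.symm w⁆ = eW ⁅a, eW.symm w⁆ + eW ⁅b, eW.symm w⁆
          rw [add_lie, map_add]
        lie_add := by
          intro a w w'
          show eW ⁅a, eW.symm (w + w')⁆ = eW ⁅a, eW.symm w⁆ + eW ⁅a, eW.symm w'⁆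
          rw [map_add, lie_add, map_add]
        leibniz_lie := by
          intro a b w
          show eW ⁅a, eW.symm (eW ⁅b, eW.symm w⁆)⁆ =
            eW ⁅⁅a, b⁆, eW.symm w⁆ + eW ⁅b, eW.symm (eW ⁅a, eW.symm w⁆)⁆
          rw [LinearEquiv.symm_apply_apply, LinearEquiv.symm_apply_apply, ← map_add,
            leibniz_lie] }
    have hWbr : ∀ (a : L) (w : W), ⁅a, w⁆ = eW ⁅a, eW.symm w⁆ := fun _ _ => rfl
    letI : LieModule K L W :=
      { smul_lie := by
          intro t a w
          show eW ⁅t • a, eW.symm w⁆ = t • eW ⁅a, eW.symm w⁆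
          rw [smul_lie, map_smul]
        lie_smul := by
          intro t a w
          show eW ⁅a, eW.symm (t • w)⁆ = t • eW ⁅a, eW.symm w⁆
          rw [map_smul, lie_smul, map_smul] }
    set fW : L →ₗ[K] L →ₗ[K] W := fM.compr₂ (eW : ↥I →ₗ[K] W) with hfW
    have hfWab : ∀ a b : L, fW a b = eW (fM a b) := fun _ _ => rfl
    have hcoc : IsLieTwoCocycle K L fW := by
      constructor
      · intro a
        rw [hfWab, hAlt a, map_zero]
      · intro a b c
        rw [hfWab, hfWab, hfWab, hfWab, hfWab, hfWab, hWbr, hWbr, hWbr,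
          LinearEquiv.symm_apply_apply, LinearEquiv.symm_apply_apply,
          LinearEquiv.symm_apply_apply, ← map_sub, ← map_add, ← map_sub, ← map_add, ← map_sub,
          hG a b c, map_zero]
    obtain ⟨g', hg'⟩ := h2 W fW hcoc
    refine ⟨(eW.symm : W →ₗ[K] ↥I).comp g', fun a b => ?_⟩
    have h := hg' a b
    rw [hWbr, hWbr] at h
    have h2' := congrArg eW.symm h
    rw [map_sub, map_sub, LinearEquiv.symm_apply_apply, LinearEquiv.symm_apply_apply,
      hfWab, LinearEquiv.symm_apply_apply] at h2'
    exact h2'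
  -- extract the data
  refine ⟨g.comp (subI I), ?_, g x, ?_⟩
  · intro u v
    have h := hg (u : L) (v : L)
    rw [hf, (hker _).mp u.2, (hker _).mp v.2, zero_smul, zero_smul, sub_self, eq_comm,
      sub_eq_zero] at h
    -- h : ⁅↑u, g ↑v⁆ - ⁅↑v, g ↑u⁆ = g ⁅↑u, ↑v⁆
    show g ⁅(u : L), (v : L)⁆ =
      ⁅((g (u : L) : ↥I) : L), v⁆ + ⁅(u : L), g (v : L)⁆
    rw [← h, skew I (g (u : L)) v]
    abel
  · intro v
    have h := hg x (v : L)
    rw [hf, hx1, (hker _).mp v.2, hpmem v, one_smul, zero_smul, sub_zero] at h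
    -- h : e0 v = ⁅x, g ↑v⁆ - ⁅↑v, g x⁆ - g ⁅x, ↑v⁆
    show e0 v = ⁅x, g (v : L)⁆ - g ⁅x, (v : L)⁆ + ⁅((g x : ↥I) : L), v⁆
    rw [skew I (g x) v, h]
    abel

end CodimOneAux

set_option maxHeartbeats 1000000 in
/-- An ideal of codimension 1 in a 2-trivial Lie algebra is a direct summand: there is
`x' ∈ L`, `x' ∉ I`, with `L = I ⊕ K∙x'` and `⁅I, x'⁆ = 0`; in particular `L` is the direct
sum of the ideal `I` and the one-dimensional ideal `K∙x'`. -/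
theorem codim_one_ideal_is_direct_summand
    (K : Type u) (L : Type v) [Field K] [CharZero K]
    [LieRing L] [LieAlgebra K L] [FiniteDimensional K L]
    (I : LieIdeal K L) (hcodim : Module.finrank K (L ⧸ I.toSubmodule) = 1)
    (h2 : IsTwoTrivial K L) :
    ∃ x' : L, x' ∉ I ∧ IsCompl I.toSubmodule (Submodule.span K {x'}) ∧
      ∀ y ∈ I, ⁅y, x'⁆ = (0 : L) := by
  classical
  open CodimOneAux in
  -- ## Step 1 : a linear functional cutting out `I`
  haveI : Nontrivial (L ⧸ I.toSubmodule) :=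
    Module.nontrivial_of_finrank_pos (R := K) (by rw [hcodim]; norm_num)
  obtain ⟨q, hq⟩ := exists_ne (0 : L ⧸ I.toSubmodule)
  obtain ⟨x, rfl⟩ := Submodule.Quotient.mk_surjective I.toSubmodule q
  set b0 := FiniteDimensional.basisSingleton (Fin 1) hcodim _ hq with hb0
  set lam : L →ₗ[K] K := (b0.coord 0).comp I.toSubmodule.mkQ with hlamdef
  have hlam_apply : ∀ a : L, lam a = b0.repr (Submodule.Quotient.mk a) 0 := by
    intro a; simp [hlamdef, Module.Basis.coord_apply, Submodule.mkQ_apply]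
  have hmk : ∀ a : L,
      (Submodule.Quotient.mk a : L ⧸ I.toSubmodule) = lam a • Submodule.Quotient.mk x := by
    intro a
    conv_lhs => rw [← b0.sum_repr (Submodule.Quotient.mk a)]
    rw [Fin.sum_univ_one, FiniteDimensional.basisSingleton_apply, hlam_apply]
  have hx1 : lam x = 1 := by
    rw [hlam_apply, ← FiniteDimensional.basisSingleton_apply (Fin 1) hcodim _ hq 0, ← hb0,
      Module.Basis.repr_self]
    simp
  have hker : ∀ a : L, a ∈ I ↔ lam a = 0 := by
    intro a
    have h1 : a ∈ I ↔ (Submodule.Quotient.mk a : L ⧸ I.toSubmodule) = 0 :=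
      (Submodule.Quotient.mk_eq_zero I.toSubmodule).symm
    rw [h1, hmk a, smul_eq_zero]
    exact ⟨fun h => h.resolve_right hq, fun h => Or.inl h⟩
  clear_value lam
  clear hb0 hlam_apply hmk
  -- ## Step 2 : the operator `[δ, ·]` on outer derivations, and its bijectivity
  haveI : FiniteDimensional K (↥I) := inferInstanceAs (FiniteDimensional K I.toSubmodule)
  set δ : (↥I) →ₗ[K] (↥I) := LieModule.toEnd K L (↥I) x with hδdef
  have hδmem : δ ∈ derivs I := delta_mem I x
  have hδap : ∀ v : ↥I, δ v = ⁅x, v⁆ := fun _ => rfl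
  set N : Submodule K ↥(derivs I) :=
    (LinearMap.range (adI I)).comap (derivs I).subtype with hN
  have hNmem : ∀ E : ↥(derivs I),
      E ∈ N ↔ ∃ i : ↥I, adI I i = (E : (↥I) →ₗ[K] (↥I)) := by
    intro E
    simp [hN, Submodule.mem_comap, LinearMap.mem_range]
  set A : ↥(derivs I) →ₗ[K] ↥(derivs I) :=
    { toFun := fun E => ⟨δ ∘ₗ (E : (↥I) →ₗ[K] (↥I)) - (E : (↥I) →ₗ[K] (↥I)) ∘ₗ δ,
        comm_mem hδmem E.2⟩
      map_add' := by
        intro E F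
        apply Subtype.ext
        simp only [Submodule.coe_add, LinearMap.comp_add, LinearMap.add_comp]
        abel
      map_smul' := by
        intro c E
        apply Subtype.ext
        simp only [Submodule.coe_smul, LinearMap.comp_smul, LinearMap.smul_comp,
          RingHom.id_apply, smul_sub] } with hA
  have hAco : ∀ E : ↥(derivs I),
      (A E : (↥I) →ₗ[K] (↥I)) =
        δ ∘ₗ (E : (↥I) →ₗ[K] (↥I)) - (E : (↥I) →ₗ[K] (↥I)) ∘ₗ δ := fun _ => rfl
  have hANle : N ≤ N.comap A := by
    intro E hE
    obtain ⟨i, hi⟩ := (hNmem E).mp hE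
    rw [Submodule.mem_comap]
    refine (hNmem (A E)).mpr ⟨δ i, ?_⟩
    rw [hAco, ← hi]
    apply LinearMap.ext
    intro v
    have h := hδmem i v
    show ⁅((δ i : ↥I) : L), v⁆ = δ ⁅(i : L), v⁆ - ⁅(i : L), δ v⁆
    rw [h]; abel
  clear_value A
  set Abar := Submodule.mapQ N N A hANle with hAbar
  have hsurj : Function.Surjective Abar := by
    intro qE
    obtain ⟨Es, rfl⟩ := Submodule.Quotient.mk_surjective N qE
    obtain ⟨E, hE, i, hEq⟩ := key_ex I x lam hker hx1 h2 (Es : (↥I) →ₗ[K] (↥I)) Es.2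
    refine ⟨Submodule.Quotient.mk ⟨E, hE⟩, ?_⟩
    rw [hAbar, Submodule.mapQ_apply]
    refine (Submodule.Quotient.eq N).mpr ?_
    refine (hNmem _).mpr ⟨-i, ?_⟩
    apply LinearMap.ext
    intro v
    show ⁅((-i : ↥I) : L), v⁆ =
      ((A ⟨E, hE⟩ : (↥I) →ₗ[K] (↥I)) - (Es : (↥I) →ₗ[K] (↥I))) v
    rw [LinearMap.sub_apply, hAco]
    show ⁅((-i : ↥I) : L), v⁆ = (δ (E v) - E (δ v)) - (Es : (↥I) →ₗ[K] (↥I)) v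
    rw [hEq v, hδap (E v)]
    have hδv : δ v = ⁅x, v⁆ := hδap v
    rw [← hδv]
    have hneg : ((-i : ↥I) : L) = -(i : L) := rfl
    rw [hneg, neg_lie]
    abel
  haveI : FiniteDimensional K ↥(derivs I) := inferInstance
  have hinj : Function.Injective Abar := LinearMap.injective_iff_surjective.mpr hsurj
  have h0 : Abar (Submodule.Quotient.mk ⟨δ, hδmem⟩) = Abar 0 := by
    rw [map_zero, hAbar, Submodule.mapQ_apply]
    have hA0 : A ⟨δ, hδmem⟩ = 0 := by
      apply Subtype.ext
      rw [hAco]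
      show δ ∘ₗ δ - δ ∘ₗ δ = (0 : (↥I) →ₗ[K] (↥I))
      rw [sub_self]
    rw [hA0, Submodule.Quotient.mk_zero]
  obtain ⟨i0, hi0⟩ := (hNmem ⟨δ, hδmem⟩).mp ((Submodule.Quotient.mk_eq_zero N).mp (hinj h0))
  -- hi0 : adI I i0 = δ
  -- ## Step 3 : conclusion
  have hlam_i0 : lam (i0 : L) = 0 := (hker _).mp i0.2
  have hlamx' : lam (x - (i0 : L)) = 1 := by
    rw [map_sub, hx1, hlam_i0, sub_zero]
  have hnotmem : x - (i0 : L) ∉ I := by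
    intro hmem
    rw [(hker _).mp hmem] at hlamx'
    exact zero_ne_one hlamx'
  have hxne : x - (i0 : L) ≠ 0 := by
    intro h0'
    rw [h0', map_zero] at hlamx'
    exact zero_ne_one hlamx'
  refine ⟨x - (i0 : L), hnotmem, ⟨?_, ?_⟩, ?_⟩
  · exact (Submodule.disjoint_span_singleton' hxne).mpr hnotmem
  · rw [codisjoint_iff]
    apply Submodule.eq_top_iff'.mpr
    intro a
    refine Submodule.mem_sup.mpr ⟨a - lam a • (x - (i0 : L)), ?_, lam a • (x - (i0 : L)),
      Submodule.smul_mem _ _ (Submodule.mem_span_singleton_self _), by abel⟩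
    apply (hker _).mpr
    rw [map_sub, map_smul, hlamx', smul_eq_mul, mul_one, sub_self]
  · intro y hy
    have h := LinearMap.ext_iff.mp hi0 ⟨y, hy⟩
    have hL : ⁅(i0 : L), y⁆ = ⁅x, y⁆ := Subtype.ext_iff.mp h
    have hz : ⁅x - (i0 : L), y⁆ = 0 := by
      rw [sub_lie, hL, sub_self]
    rw [← lie_skew, hz, neg_zero]
end

section
/- No 2-dimensional Lie algebra over a field K of characteristic zero is 2-trivial; that is, every 2-dimensional Lie algebra L over K admits a finite-dimensional L-module V with H^2(L,V) ≠ 0. -/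
universe u v

/-- No 2-dimensional Lie algebra over a field of characteristic zero is 2-trivial; that is,
every 2-dimensional Lie algebra admits a finite-dimensional module `V` with `H²(L,V) ≠ 0`. -/
theorem two_dimensional_not_isTwoTrivial
    (K : Type u) (L : Type v) [Field K] [CharZero K]
    [LieRing L] [LieAlgebra K L] [FiniteDimensional K L]
    (hdim : Module.finrank K L = 2) :
    ¬ IsTwoTrivial K L := by
  intro h
  -- a basis e, f of L
  let B : Module.Basis (Fin 2) K L := Module.finBasisOfFinrankEq K L hdim
  -- coordinate expansion
  have hrepr : ∀ x : L, x = B.repr x 0 • B 0 + B.repr x 1 • B 1 := by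
    intro x
    have := B.sum_repr x
    rw [Fin.sum_univ_two] at this
    exact this.symm
  have hef : ⁅B 0, B 1⁆ = B.repr ⁅B 0, B 1⁆ 0 • B 0 + B.repr ⁅B 0, B 1⁆ 1 • B 1 := hrepr _
  -- every bracket is a multiple of ⁅e, f⁆
  have hbr : ∀ x y : L, ⁅x, y⁆ =
      (B.repr x 0 * B.repr y 1 - B.repr x 1 * B.repr y 0) • ⁅B 0, B 1⁆ := by
    intro x y
    conv_lhs => rw [hrepr x, hrepr y]
    simp only [lie_add, add_lie, lie_smul, smul_lie, lie_self, smul_zero, zero_add,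
      add_zero, smul_smul]
    rw [show ⁅B 1, B 0⁆ = -⁅B 0, B 1⁆ from (lie_skew (B 1) (B 0)).symm]
    module
  -- the character λ
  let lam : L →ₗ[K] K :=
    B.repr ⁅B 0, B 1⁆ 1 • B.coord 0 - B.repr ⁅B 0, B 1⁆ 0 • B.coord 1
  have hlam : ∀ x : L, lam x
      = B.repr ⁅B 0, B 1⁆ 1 * B.repr x 0 - B.repr ⁅B 0, B 1⁆ 0 * B.repr x 1 := by
    intro x
    simp [lam, Module.Basis.coord_apply, smul_eq_mul]
  have hlam_br : ∀ x y : L, lam ⁅x, y⁆ = 0 := by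
    intro x y
    rw [hbr x y, map_smul, smul_eq_mul, hlam]
    ring
  -- the module structure on K via λ
  letI : LieRingModule L K :=
    { bracket := fun x v => lam x * v
      add_lie := by intro x y m; show lam (x + y) * m = lam x * m + lam y * m
                    rw [map_add]; ring
      lie_add := by intro x m n; show lam x * (m + n) = lam x * m + lam x * n; ring
      leibniz_lie := by
        intro x y m
        show lam x * (lam y * m) = lam ⁅x, y⁆ * m + lam y * (lam x * m)
        rw [hlam_br]; ring }
  have hlie : ∀ (x : L) (v : K), ⁅x, v⁆ = lam x * v := fun _ _ => rfl
  letI : LieModule K L K :=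
    { smul_lie := by
        intro t x m
        show lam (t • x) * m = t • (lam x * m)
        rw [map_smul]; simp [smul_eq_mul]; ring
      lie_smul := by
        intro t x m
        show lam x * (t • m) = t • (lam x * m)
        simp [smul_eq_mul]; ring }
  -- the determinant 2-form
  let F : L →ₗ[K] L →ₗ[K] K := LinearMap.mk₂ K
    (fun x y => B.repr x 0 * B.repr y 1 - B.repr x 1 * B.repr y 0)
    (by intro m₁ m₂ n; simp [map_add]; ring)
    (by intro c m n; simp [map_smul, smul_eq_mul]; ring)
    (by intro m n₁ n₂; simp [map_add]; ring)
    (by intro c m n; simp [map_smul, smul_eq_mul]; ring)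
  have hF : ∀ x y : L, F x y = B.repr x 0 * B.repr y 1 - B.repr x 1 * B.repr y 0 :=
    fun _ _ => rfl
  have hcocycle : IsLieTwoCocycle K L F := by
    constructor
    · intro x; rw [hF]; ring
    · intro x y z
      rw [hbr x y, hbr x z, hbr y z]
      simp only [map_smul, LinearMap.smul_apply, smul_eq_mul, hlie, hF, hlam]
      ring
  obtain ⟨g, hg⟩ := h K F hcocycle
  have := hg (B 0) (B 1)
  rw [hF, hlie, hlie] at this
  conv_rhs at this => rw [hef]
  rw [map_add, map_smul, map_smul] at this
  simp only [hlam, Module.Basis.repr_self, Finsupp.single_eq_same, smul_eq_mul,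
    Finsupp.single_apply] at this
  norm_num at this
  exact one_ne_zero (α := K) (by linear_combination this)
end
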